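/- Let n, m, ν be positive reals with n ≠ m, and set d = (n+m)/2 − ν and λ = (m−n)²/(8ν) − n − m. Then the 4×4 real symmetric matrix V₁ = [[n+λ, 0, −d−λ, 0], [0, n, 0, d], [−d−λ, 0, m+λ, 0], [0, d, 0, m]] is not positive semidefinite (it has a negative eigenvalue). -/

import Mathlib

open Matrix

noncomputable section

/-- the candidate optimal matrix for a nonsymmetric state is unphysical. -/
theorem nonsymmetric_candidate_not_posSemidef (n m v : ℝ)
    (hn : 0 < n) (hm : 0 < m) (hv : 0 < v) (hnm : n ≠ m) :
    ¬ (!![n + ((m - n)^2/(8*v) - n - m), 0, -((n+m)/2 - v) - ((m - n)^2/(8*v) - n - m), 0;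
        0, n, 0, (n+m)/2 - v;
        -((n+m)/2 - v) - ((m - n)^2/(8*v) - n - m), 0, m + ((m - n)^2/(8*v) - n - m), 0;
        0, (n+m)/2 - v, 0, m] : Matrix (Fin 4) (Fin 4) ℝ).PosSemidef := by
  intro h
  obtain ⟨-, hq⟩ := posSemidef_iff_dotProduct_mulVec.mp h
  set a : ℝ := n + ((m - n)^2/(8*v) - n - m) with ha
  set b : ℝ := -((n+m)/2 - v) - ((m - n)^2/(8*v) - n - m) with hb
  set c : ℝ := m + ((m - n)^2/(8*v) - n - m) with hc
  have hD : a * c - b * b = -(v*(n+m+v)) := by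
    rw [ha, hb, hc]; field_simp; ring
  have hD' : a * c - b * b < 0 := by rw [hD]; nlinarith
  have h1 := hq ![1,0,0,0]
  have h2 := hq ![0,0,1,0]
  have h3 := hq ![b,0,-a,0]
  have h4 := hq ![c,0,-b,0]
  have h5 := hq ![1,0,-b,0]
  simp [Matrix.mulVec, dotProduct, Fin.sum_univ_four] at h1 h2 h3 h4 h5
  nlinarith [h1, h2, h3, h4, h5, hD', sq_nonneg b, mul_nonneg h1 h2]
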